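/- The Minkowski question mark function has no fixed point in the open interval (0, 1/3). -/

import Mathlib

open scoped Classical

/-- The Gauss map `x ↦ {1/x}`. -/
noncomputable def gaussMap (x : ℝ) : ℝ := Int.fract x⁻¹

/-- `cfDigit x n` is the `(n+1)`-st partial quotient `a_{n+1}` of the continued
fraction expansion `x = [a_1, a_2, …]` of `x ∈ (0,1)`. -/
noncomputable def cfDigit (x : ℝ) (n : ℕ) : ℤ := ⌊(gaussMap^[n] x)⁻¹⌋

/-- The Minkowski question mark function, via the Denjoy–Salem series
`?(x) = ∑_{k≥1} (-1)^{k+1} / 2^{a_1+⋯+a_k-1}` (a finite sum for rational `x`). -/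
noncomputable def minkowskiQ (x : ℝ) : ℝ :=
  ∑' k : ℕ, if ∀ i ≤ k, 0 < cfDigit x i then
      (-1 : ℝ) ^ k / (2 : ℝ) ^ ((∑ i ∈ Finset.range (k + 1), cfDigit x i) - 1)
    else 0

theorem no_fixed_point_in_Ioo_zero_third :
    ∀ x ∈ Set.Ioo (0 : ℝ) (1 / 3), minkowskiQ x ≠ x := by
  rintro x ⟨hx0, hx3⟩ hfix
  set S : ℕ → ℤ := fun k => ∑ i ∈ Finset.range (k + 1), cfDigit x i with hS
  set f : ℕ → ℝ := fun k => if ∀ i ≤ k, 0 < cfDigit x i then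
      (-1 : ℝ) ^ k / (2 : ℝ) ^ (S k - 1) else 0 with hf
  have hQ : minkowskiQ x = ∑' k, f k := rfl
  have hfpos : ∀ k, (∀ i ≤ k, 0 < cfDigit x i) →
      f k = (-1 : ℝ) ^ k / (2 : ℝ) ^ (S k - 1) := fun k hk => if_pos hk
  have hfneg : ∀ k, ¬ (∀ i ≤ k, 0 < cfDigit x i) → f k = 0 := fun k hk => if_neg hk
  set a : ℤ := cfDigit x 0 with ha
  have ha0 : a = ⌊x⁻¹⌋ := by simp [ha, cfDigit]
  -- a ≥ 3
  have hxinv3 : (3 : ℝ) < x⁻¹ := by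
    rw [show (3 : ℝ) = (1/3 : ℝ)⁻¹ by norm_num]
    exact inv_strictAnti₀ hx0 hx3
  have ha3 : 3 ≤ a := by
    rw [ha0]
    exact Int.le_floor.2 (by exact_mod_cast hxinv3.le)
  -- digit sums grow
  have hSge : ∀ k, (∀ i ≤ k, 0 < cfDigit x i) → (k : ℤ) + 1 ≤ S k := by
    intro k hk
    calc (k : ℤ) + 1 = ∑ _i ∈ Finset.range (k + 1), (1 : ℤ) := by simp
    _ ≤ S k := Finset.sum_le_sum fun i hi =>
        hk i (Nat.lt_succ_iff.mp (Finset.mem_range.mp hi))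
  -- |f k| ≤ (1/2)^k
  have habs : ∀ k, |f k| ≤ (2 : ℝ)⁻¹ ^ k := by
    intro k
    by_cases hk : ∀ i ≤ k, 0 < cfDigit x i
    · rw [hfpos k hk, abs_div, abs_pow, abs_neg, abs_one, one_pow,
        abs_of_pos (zpow_pos (by norm_num : (0:ℝ) < 2) _), one_div, ← zpow_neg]
      calc (2:ℝ) ^ (-(S k - 1)) ≤ (2:ℝ) ^ (-(k:ℤ)) := by
            apply zpow_le_zpow_right₀ (by norm_num)
            have := hSge k hk; omega
      _ = (2:ℝ)⁻¹ ^ k := by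
            rw [zpow_neg, ← zpow_natCast, ← inv_zpow]
    · rw [hfneg k hk, abs_zero]
      positivity
  have hsum : Summable f := by
    apply Summable.of_abs
    exact Summable.of_nonneg_of_le (fun k => abs_nonneg _) habs
      (summable_geometric_of_lt_one (by norm_num) (by norm_num))
  -- consecutive pairs (odd, even) sum to ≤ 0
  have hpair : ∀ j : ℕ, f (2 * j + 1) + f (2 * j + 2) ≤ 0 := by
    intro j
    by_cases hc : ∀ i ≤ 2 * j + 2, 0 < cfDigit x i
    · have hc1 : ∀ i ≤ 2 * j + 1, 0 < cfDigit x i := fun i hi => hc i (by omega)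
      have hSle : S (2 * j + 1) ≤ S (2 * j + 2) := by
        have h1 : S (2 * j + 2) = S (2 * j + 1) + cfDigit x (2 * j + 2) := by
          simp [hS, Finset.sum_range_succ]
        have h2 := hc (2 * j + 2) le_rfl
        omega
      rw [hfpos _ hc, hfpos _ hc1,
        Odd.neg_one_pow ⟨j, by ring⟩, Even.neg_one_pow ⟨j + 1, by ring⟩, neg_div]
      have hpos : (0:ℝ) < (2:ℝ) ^ (S (2 * j + 1) - 1) :=
        zpow_pos (by norm_num) _
      have hle : (2:ℝ) ^ (S (2 * j + 1) - 1) ≤ (2:ℝ) ^ (S (2 * j + 2) - 1) :=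
        zpow_le_zpow_right₀ (by norm_num) (by omega)
      have := one_div_le_one_div_of_le hpos hle
      linarith
    · have h2 : f (2 * j + 2) = 0 := hfneg _ hc
      have h1 : f (2 * j + 1) ≤ 0 := by
        by_cases hc1 : ∀ i ≤ 2 * j + 1, 0 < cfDigit x i
        · rw [hfpos _ hc1, Odd.neg_one_pow ⟨j, by ring⟩, neg_div]
          simp only [neg_nonpos]
          positivity
        · rw [hfneg _ hc1]
      linarith
  -- the tail is ≤ 0
  have hg : Summable fun k => f (k + 1) := (summable_nat_add_iff 1).2 hsum
  have he : Summable fun j => f (2 * j + 1) :=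
    hsum.comp_injective (fun u v huv => by omega)
  have ho : Summable fun j => f (2 * j + 1 + 1) :=
    hsum.comp_injective (fun u v huv => by omega)
  have htail : (∑' k, f (k + 1)) ≤ 0 := by
    have heo := tsum_even_add_odd (f := fun k => f (k + 1)) ?_ ?_
    · rw [← heo]
      have : (∑' j, f (2 * j + 1)) + ∑' j, f (2 * j + 1 + 1) =
          ∑' j, (f (2 * j + 1) + f (2 * j + 1 + 1)) := (Summable.tsum_add he ho).symm
      have hterm : ∀ j : ℕ, f (2 * j + 1) + f (2 * j + 1 + 1) ≤ 0 := by
        intro j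
        have := hpair j
        convert this using 3 <;> omega
      calc (∑' j, f (2 * j + 1)) + ∑' j, f (2 * j + 1 + 1)
          = ∑' j, (f (2 * j + 1) + f (2 * j + 1 + 1)) := this
        _ ≤ 0 := tsum_nonpos hterm
    · exact he
    · exact ho
  -- f 0 = 2 ^ (1 - a)
  have hc0 : ∀ i ≤ 0, 0 < cfDigit x i := by
    intro i hi
    interval_cases i
    omega
  have hS0 : S 0 = a := by simp [hS, ha]
  have hf0 : f 0 = (2 : ℝ) ^ (1 - a) := by
    rw [hfpos 0 hc0, hS0, pow_zero, one_div, ← zpow_neg, neg_sub]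
  -- so  minkowskiQ x ≤ 2 ^ (1 - a)
  have hQle : minkowskiQ x ≤ (2 : ℝ) ^ (1 - a) := by
    rw [hQ, Summable.tsum_eq_zero_add hsum, hf0]
    linarith
  -- and 2 ^ (1 - a) < x
  have hxa1 : x⁻¹ < (a : ℝ) + 1 := by
    rw [ha0]; exact Int.lt_floor_add_one x⁻¹
  have h2a : ((a : ℝ) + 1) ≤ (2 : ℝ) ^ (a - 1) := by
    obtain ⟨n, hn⟩ : ∃ n : ℕ, a = (n : ℤ) + 3 := ⟨(a - 3).toNat, by omega⟩
    have hpow : (2 : ℝ) ^ (a - 1) = (2 : ℝ) ^ (n + 2 : ℕ) := by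
      rw [← zpow_natCast]
      congr 1
      push_cast
      omega
    rw [hpow, hn]
    have hnlt : (n : ℝ) + 1 ≤ 2 ^ n := by exact_mod_cast Nat.lt_two_pow_self (n := n)
    have h1n : (1 : ℝ) ≤ 2 ^ n := by exact_mod_cast Nat.one_le_two_pow
    have hexp : (2 : ℝ) ^ (n + 2 : ℕ) = 4 * 2 ^ n := by ring
    push_cast
    linarith
  have hxinvlt : x⁻¹ < (2 : ℝ) ^ (a - 1) := lt_of_lt_of_le hxa1 h2a
  have hxgt : (2 : ℝ) ^ (1 - a) < x := by
    have hpos : (0 : ℝ) < x⁻¹ := inv_pos.2 hx0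
    have := inv_strictAnti₀ hpos hxinvlt
    rw [inv_inv, ← zpow_neg, neg_sub] at this
    exact this
  have : minkowskiQ x < x := lt_of_le_of_lt hQle hxgt
  rw [hfix] at this
  exact lt_irrefl x this
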